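/- Let A be a magmatic algebra over a field K with a reduced unital-infinitesimal coproduct δ. If x₁, …, xₙ (n ≥ 2) are primitive elements of A, then δ(ωⁿ(x₁,…,xₙ)) = Σ_{i=1}^{n−1} ωⁱ(x₁,…,xᵢ) ⊗ ω^{n−i}(x_{i+1},…,xₙ). -/
import Mathlib


open TensorProduct

/-- A K-linear map `δ : A → A ⊗ A` satisfies the reduced unital-infinitesimal
compatibility relation if
`δ(a·b) = (id ⊗ mulRight b)(δ a) + (mulLeft a ⊗ id)(δ b) + a ⊗ b` for all `a b`. -/
def IsUICoproduct (K : Type*) [Field K] (A : Type*) [NonUnitalNonAssocRing A]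
    [Module K A] [SMulCommClass K A A] [IsScalarTower K A A]
    (δ : A →ₗ[K] A ⊗[K] A) : Prop :=
  ∀ a b : A,
    δ (a * b) =
      TensorProduct.map LinearMap.id (LinearMap.mulRight K b) (δ a) +
      TensorProduct.map (LinearMap.mulLeft K a) LinearMap.id (δ b) +
      a ⊗ₜ[K] b

/-- The left comb `ωⁿ(x₁,…,xₙ) = ((x₁·x₂)·x₃)⋯·xₙ`, given on the (nonempty) list
of its arguments (junk value `0` on the empty list). -/
def leftComb {A : Type*} [Mul A] [Zero A] : List A → A
  | [] => 0
  | x :: xs => xs.foldl (· * ·) x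

theorem leftComb_append_singleton {A : Type*} [Mul A] [Zero A] (l : List A) (hl : l ≠ [])
    (x : A) : leftComb (l ++ [x]) = leftComb l * x := by
  obtain ⟨y, ys, rfl⟩ := List.exists_cons_of_ne_nil hl
  simp [leftComb, List.foldl_append]

/-- The coproduct of a left comb of primitive elements. -/
theorem ui_coproduct_leftComb_of_primitives
    (K : Type*) [Field K] (A : Type*) [NonUnitalNonAssocRing A]
    [Module K A] [SMulCommClass K A A] [IsScalarTower K A A]
    (δ : A →ₗ[K] A ⊗[K] A) (hui : IsUICoproduct K A δ)
    (n : ℕ) (hn : 2 ≤ n) (l : List A) (hl : l.length = n)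
    (hprim : ∀ x ∈ l, δ x = 0) :
    δ (leftComb l) =
      ∑ i ∈ Finset.Icc 1 (n - 1),
        (leftComb (l.take i)) ⊗ₜ[K] (leftComb (l.drop i)) := by
  induction n, hn using Nat.le_induction generalizing l with
  | base =>
    obtain ⟨a, b, rfl⟩ : ∃ a b, l = [a, b] := by
      match l, hl with
      | [a, b], _ => exact ⟨a, b, rfl⟩
    have ha : δ a = 0 := hprim a (by simp)
    have hb : δ b = 0 := hprim b (by simp)
    have : leftComb [a, b] = a * b := rfl
    rw [this, hui a b, ha, hb]
    simp [leftComb]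
  | succ n hn2 IH =>
    have hne : l ≠ [] := by intro h; rw [h] at hl; simp at hl
    set x := l.getLast hne with hxdef
    have hx : l.dropLast ++ [x] = l := List.dropLast_append_getLast hne
    have hl' : l.dropLast.length = n := by rw [List.length_dropLast, hl]; rfl
    have hne' : l.dropLast ≠ [] := by
      intro h; rw [h] at hl'; simp at hl'; omega
    have hδx : δ x = 0 := hprim x (List.getLast_mem hne)
    have hcomb : leftComb l = leftComb l.dropLast * x := by
      conv_lhs => rw [← hx]
      exact leftComb_append_singleton _ hne' x
    rw [hcomb, hui, hδx, map_zero, add_zero]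
    rw [IH l.dropLast hl' (fun y hy => hprim y (List.mem_of_mem_dropLast hy))]
    rw [map_sum]
    have hsplit : ∑ i ∈ Finset.Icc 1 (n + 1 - 1),
        (leftComb (l.take i)) ⊗ₜ[K] (leftComb (l.drop i))
        = (∑ i ∈ Finset.Icc 1 (n - 1),
            (leftComb (l.take i)) ⊗ₜ[K] (leftComb (l.drop i)))
          + (leftComb (l.take n)) ⊗ₜ[K] (leftComb (l.drop n)) := by
      rw [show n + 1 - 1 = (n - 1) + 1 by omega, Finset.sum_Icc_succ_top (by omega),
        show n - 1 + 1 = n by omega]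
    rw [hsplit]
    congr 1
    · apply Finset.sum_congr rfl
      intro i hi
      simp only [Finset.mem_Icc] at hi
      have hi' : i ≤ l.dropLast.length := by omega
      have ht : List.take i l = List.take i l.dropLast := by
        conv_lhs => rw [← hx]
        exact List.take_append_of_le_length hi'
      have hd : List.drop i l = List.drop i l.dropLast ++ [x] := by
        conv_lhs => rw [← hx]
        exact List.drop_append_of_le_length hi'
      rw [TensorProduct.map_tmul, LinearMap.id_apply, LinearMap.mulRight_apply,
        ht, hd, leftComb_append_singleton]
      intro h
      have := congrArg List.length h
      rw [List.length_drop, hl'] at this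
      simp at this
      omega
    · have ht : List.take n l = l.dropLast := by
        conv_lhs => rw [← hx]
        exact List.take_left' hl'
      have hd : List.drop n l = [x] := by
        conv_lhs => rw [← hx]
        exact List.drop_left' hl'
      rw [ht, hd]
      rfl
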